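/- Let m ≥ 14 with m ≢ 0 (mod 4), and suppose Δ(x₁,…,xₙ) = a₁P_m^{(r₁)}(x₁) + ⋯ + aₙP_m^{(rₙ)}(xₙ) is a generalized shifted m-gonal form (aᵢ positive integers, gcd(rᵢ, m-2) = 1, 0 ≤ rᵢ ≤ m-2) that represents every non-negative integer N ≤ (m-2)/2 (i.e., for each such N there exist integers xᵢ with Δ(x) = N). Then 2ⁿ ≥ ⌊m/2⌋. -/
import Mathlib


/-- The generalized shifted `m`-gonal number of level `r` at `x`. -/
def shiftedPolygonal (m r x : ℤ) : ℤ := ((m - 2) * x ^ 2 - (m - 2 - 2 * r) * x) / 2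

lemma consec1 (x : ℤ) : 0 ≤ x * (x - 1) := by
  rcases le_or_gt x 0 with h | h
  · nlinarith [mul_nonneg (show (0:ℤ) ≤ -x by omega) (show (0:ℤ) ≤ -(x - 1) by omega)]
  · exact mul_nonneg (by omega) (by omega)

lemma consec2 (x : ℤ) : 0 ≤ x * (x + 1) := by
  rcases le_or_gt x (-1) with h | h
  · nlinarith [mul_nonneg (show (0:ℤ) ≤ -x by omega) (show (0:ℤ) ≤ -(x + 1) by omega)]
  · exact mul_nonneg (by omega) (by omega)

lemma two_mul_shifted (m r x : ℤ) :
    2 * shiftedPolygonal m r x = (m - 2 - r) * (x * (x - 1)) + r * (x * (x + 1)) := by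
  have hdvd : (2:ℤ) ∣ (m - 2) * x ^ 2 - (m - 2 - 2 * r) * x := by
    rcases Int.even_or_odd x with ⟨k, hk⟩ | ⟨k, hk⟩
    · exact ⟨(m - 2) * 2 * k ^ 2 - (m - 2 - 2 * r) * k, by subst hk; ring⟩
    · exact ⟨(m - 2) * (2 * k ^ 2 + 2 * k) - (m - 2 - 2 * r) * k + r, by subst hk; ring⟩
  rw [shiftedPolygonal, Int.mul_ediv_cancel' hdvd]; ring

lemma shifted_nonneg (m r : ℤ) (hr0 : 0 ≤ r) (hr1 : r ≤ m - 2) (x : ℤ) :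
    0 ≤ shiftedPolygonal m r x := by
  have key := two_mul_shifted m r x
  have h1 := consec1 x
  have h2 := consec2 x
  nlinarith [mul_nonneg (show (0:ℤ) ≤ m - 2 - r by omega) h1, mul_nonneg hr0 h2]

lemma shifted_cases (m r : ℤ) (hm : 14 ≤ m) (hr0 : 0 ≤ r) (hr1 : r ≤ m - 2) (x : ℤ)
    (hsmall : 2 * shiftedPolygonal m r x ≤ m - 2) :
    shiftedPolygonal m r x = 0 ∨ shiftedPolygonal m r x = min r (m - 2 - r) := by
  have key := two_mul_shifted m r x
  have hx : x = -1 ∨ x = 0 ∨ x = 1 := by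
    by_contra h
    push_neg at h
    have h2 : 2 ≤ x ∨ x ≤ -2 := by omega
    rcases h2 with h2 | h2
    · have e1 : 2 ≤ x * (x - 1) := by nlinarith
      have e2 : 6 ≤ x * (x + 1) := by nlinarith
      nlinarith [mul_le_mul_of_nonneg_left e1 (show (0:ℤ) ≤ m - 2 - r by omega),
        mul_le_mul_of_nonneg_left e2 hr0]
    · have e1 : 6 ≤ x * (x - 1) := by nlinarith
      have e2 : 2 ≤ x * (x + 1) := by nlinarith
      nlinarith [mul_le_mul_of_nonneg_left e1 (show (0:ℤ) ≤ m - 2 - r by omega),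
        mul_le_mul_of_nonneg_left e2 hr0]
  rcases hx with h | h | h
  · subst h
    have hP : shiftedPolygonal m r (-1) = m - 2 - r := by
      have h2 : 2 * shiftedPolygonal m r (-1) = 2 * (m - 2 - r) := by rw [key]; ring
      omega
    right
    rw [hP]
    rw [hP] at hsmall
    rw [min_eq_right (by omega)]
  · subst h
    left
    have h2 : 2 * shiftedPolygonal m r 0 = 0 := by rw [key]; ring
    omega
  · subst h
    have hP : shiftedPolygonal m r 1 = r := by
      have h2 : 2 * shiftedPolygonal m r 1 = 2 * r := by rw [key]; ring
      omega
    right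
    rw [hP]
    rw [hP] at hsmall
    rw [min_eq_left (by omega)]

theorem stmt_18 (m : ℤ) (hm : 14 ≤ m) (hm4 : ¬ (4 ∣ m)) (n : ℕ)
    (a r : Fin n → ℤ) (ha : ∀ i, 0 < a i)
    (hr : ∀ i, Int.gcd (r i) (m - 2) = 1 ∧ 0 ≤ r i ∧ r i ≤ m - 2)
    (hrep : ∀ N : ℤ, 0 ≤ N → 2 * N ≤ m - 2 →
      ∃ x : Fin n → ℤ, ∑ i, a i * shiftedPolygonal m (r i) (x i) = N) :
    m / 2 ≤ 2 ^ n := by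
  classical
  set val : Fin n → ℤ := fun i => min (r i) (m - 2 - r i) with hval
  -- Any representation of a small N is determined by which coordinates contribute 0.
  have hrepr : ∀ N : ℤ, 0 ≤ N → 2 * N ≤ m - 2 → ∀ x : Fin n → ℤ,
      (∑ i, a i * shiftedPolygonal m (r i) (x i) = N) →
      N = ∑ i, (if shiftedPolygonal m (r i) (x i) = 0 then 0 else a i * val i) := by
    intro N hN0 hN2 x hx
    rw [← hx]
    refine Finset.sum_congr rfl fun i _ => ?_
    obtain ⟨hgcd, hr0, hr1⟩ := hr i
    have hPnn : 0 ≤ shiftedPolygonal m (r i) (x i) := shifted_nonneg _ _ hr0 hr1 _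
    have hle : a i * shiftedPolygonal m (r i) (x i) ≤ N := by
      rw [← hx]
      apply Finset.single_le_sum (fun j _ => ?_) (Finset.mem_univ i)
      obtain ⟨_, hr0', hr1'⟩ := hr j
      exact mul_nonneg (le_of_lt (ha j)) (shifted_nonneg _ _ hr0' hr1' _)
    have hsmall : 2 * shiftedPolygonal m (r i) (x i) ≤ m - 2 := by
      have h1 : 1 * shiftedPolygonal m (r i) (x i) ≤ a i * shiftedPolygonal m (r i) (x i) :=
        mul_le_mul_of_nonneg_right (ha i) hPnn
      linarith
    rcases shifted_cases m (r i) hm hr0 hr1 (x i) hsmall with h | h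
    · simp [h]
    · by_cases h0 : shiftedPolygonal m (r i) (x i) = 0
      · simp [h0, ← h]
      · rw [if_neg h0, h]
  -- The coding function.
  set f : ℤ → (Fin n → Bool) := fun N =>
    if h : 0 ≤ N ∧ 2 * N ≤ m - 2 then
      fun i => decide (shiftedPolygonal m (r i) ((hrep N h.1 h.2).choose i) ≠ 0)
    else fun _ => false with hf
  have hinj : Set.InjOn f (Finset.Icc (0:ℤ) ((m - 2) / 2) : Set ℤ) := by
    intro N hN N' hN' hff
    simp only [Finset.coe_Icc, Set.mem_Icc] at hN hN'
    have hcond : 0 ≤ N ∧ 2 * N ≤ m - 2 := ⟨hN.1, by omega⟩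
    have hcond' : 0 ≤ N' ∧ 2 * N' ≤ m - 2 := ⟨hN'.1, by omega⟩
    have fN : f N = fun i =>
        decide (shiftedPolygonal m (r i) ((hrep N hcond.1 hcond.2).choose i) ≠ 0) := by
      rw [hf]; exact dif_pos hcond
    have fN' : f N' = fun i =>
        decide (shiftedPolygonal m (r i) ((hrep N' hcond'.1 hcond'.2).choose i) ≠ 0) := by
      rw [hf]; exact dif_pos hcond'
    have e1 := hrepr N hcond.1 hcond.2 _ (hrep N hcond.1 hcond.2).choose_spec
    have e2 := hrepr N' hcond'.1 hcond'.2 _ (hrep N' hcond'.1 hcond'.2).choose_spec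
    rw [e1, e2]
    refine Finset.sum_congr rfl fun i _ => ?_
    have hi := congrFun hff i
    rw [fN, fN'] at hff
    have hi' := congrFun hff i
    simp only [decide_eq_decide] at hi'
    by_cases h0 : shiftedPolygonal m (r i) ((hrep N hcond.1 hcond.2).choose i) = 0
    · have h0' : shiftedPolygonal m (r i) ((hrep N' hcond'.1 hcond'.2).choose i) = 0 := by
        by_contra hc; exact (hi'.mpr hc) h0
      simp [h0, h0']
    · have h0' : shiftedPolygonal m (r i) ((hrep N' hcond'.1 hcond'.2).choose i) ≠ 0 :=
        hi'.mp h0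
      simp [h0, h0']
  have hmaps : ∀ N ∈ Finset.Icc (0:ℤ) ((m - 2) / 2),
      f N ∈ (Finset.univ : Finset (Fin n → Bool)) := fun _ _ => Finset.mem_univ _
  have hcard := Finset.card_le_card_of_injOn f hmaps hinj
  rw [Finset.card_univ, Int.card_Icc] at hcard
  have hcu : Fintype.card (Fin n → Bool) = 2 ^ n := by simp
  rw [hcu] at hcard
  have h1 : ((m - 2) / 2 + 1 - 0 : ℤ) ≤ ((2 ^ n : ℕ) : ℤ) := Int.toNat_le.mp hcard
  push_cast at h1
  have h2 : m / 2 ≤ (m - 2) / 2 + 1 := by omega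
  linarith
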